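/- If {e_k} is a frame over X with bounds B1, B2 and S is its frame operator, then the dual family ẽ_k := S⁻¹ e_k is a frame over X with frame bounds B2⁻¹ and B1⁻¹. -/

import Mathlib

open scoped ComplexInnerProductSpace

/-- If `{e k}` is a frame over `X` with bounds `B1, B2` and `S` is its frame operator
(with inverse `T`), then the dual family `ẽ k := S⁻¹ (e k)` is a frame over `X` with
frame bounds `B2⁻¹` and `B1⁻¹`. -/
theorem dual_frame_is_frame
    {X : Type*} [NormedAddCommGroup X] [InnerProductSpace ℂ X] [CompleteSpace X]
    (e : ℕ → X) (B1 B2 : ℝ) (hB1 : 0 < B1) (hB2 : 0 < B2)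
    (hsum : ∀ x : X, Summable fun k => ‖⟪e k, x⟫‖ ^ 2)
    (hlow : ∀ x : X, B1 * ‖x‖ ^ 2 ≤ ∑' k, ‖⟪e k, x⟫‖ ^ 2)
    (hupp : ∀ x : X, ∑' k, ‖⟪e k, x⟫‖ ^ 2 ≤ B2 * ‖x‖ ^ 2)
    (S T : X →L[ℂ] X)
    (hS : ∀ x : X, HasSum (fun k => ⟪e k, x⟫ • e k) (S x))
    (hST : S ∘L T = 1) (hTS : T ∘L S = 1) :
    ∀ x : X, (Summable fun k => ‖⟪T (e k), x⟫‖ ^ 2) ∧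
      B2⁻¹ * ‖x‖ ^ 2 ≤ ∑' k, ‖⟪T (e k), x⟫‖ ^ 2 ∧
      ∑' k, ‖⟪T (e k), x⟫‖ ^ 2 ≤ B1⁻¹ * ‖x‖ ^ 2 := by
  have hST' : ∀ z : X, S (T z) = z := fun z => by
    have := ContinuousLinearMap.ext_iff.mp hST z
    simpa using this
  have hinner : ∀ a b : X, HasSum (fun k => ⟪e k, b⟫ * ⟪a, e k⟫) ⟪a, S b⟫ := by
    intro a b
    have := (innerSL ℂ a).hasSum (hS b)
    simpa [inner_smul_right] using this
  have hSsa : ∀ a b : X, ⟪S a, b⟫ = ⟪a, S b⟫ := by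
    intro a b
    have h1 := (hinner b a).star
    have h2 : HasSum (fun k => ⟪e k, b⟫ * ⟪a, e k⟫) ⟪S a, b⟫ := by
      have e1 : (fun k => star (⟪e k, a⟫ * ⟪b, e k⟫)) = fun k => ⟪e k, b⟫ * ⟪a, e k⟫ := by
        funext k
        simp only [star_mul', Complex.star_def, inner_conj_symm]
        ring
      have e2 : star ⟪b, S a⟫ = ⟪S a, b⟫ := by
        simp [Complex.star_def, inner_conj_symm]
      rw [e1, e2] at h1
      exact h1
    exact (h2.unique (hinner a b))
  have hTsa : ∀ a b : X, ⟪T a, b⟫ = ⟪a, T b⟫ := by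
    intro a b
    calc ⟪T a, b⟫ = ⟪T a, S (T b)⟫ := by rw [hST']
      _ = ⟪S (T a), T b⟫ := (hSsa _ _).symm
      _ = ⟪a, T b⟫ := by rw [hST']
  intro x
  set y := T x with hy
  have hxy : S y = x := hST' x
  have key : ∀ k, ⟪T (e k), x⟫ = ⟪e k, y⟫ := fun k => hTsa (e k) x
  have hsum' : Summable fun k => ‖⟪T (e k), x⟫‖ ^ 2 := by
    simpa only [key] using hsum y
  have htse : ∑' k, ‖⟪T (e k), x⟫‖ ^ 2 = ∑' k, ‖⟪e k, y⟫‖ ^ 2 :=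
    tsum_congr fun k => by rw [key]
  set P : ℝ := ∑' k, ‖⟪e k, y⟫‖ ^ 2 with hPdef
  set Q : ℝ := ∑' k, ‖⟪e k, x⟫‖ ^ 2 with hQdef
  -- P = re ⟪y, x⟫
  have hPsum : HasSum (fun k => ‖⟪e k, y⟫‖ ^ 2) ((⟪y, x⟫ : ℂ).re) := by
    have h := hinner y y
    rw [hxy] at h
    have h' : HasSum (fun k => ((‖⟪e k, y⟫‖ ^ 2 : ℝ) : ℂ)) ⟪y, x⟫ := by
      have e1 : (fun k => ⟪e k, y⟫ * ⟪y, e k⟫) = fun k => ((‖⟪e k, y⟫‖ ^ 2 : ℝ) : ℂ) := by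
        funext k
        rw [show ⟪y, e k⟫ = starRingEnd ℂ ⟪e k, y⟫ from (inner_conj_symm _ _).symm,
          Complex.mul_conj]
        norm_cast
        rw [Complex.normSq_eq_norm_sq]
      rw [e1] at h
      exact h
    have := h'.mapL Complex.reCLM
    simpa only [Complex.reCLM_apply, Complex.ofReal_re] using this
  have hPval : P = (⟪y, x⟫ : ℂ).re := hPsum.tsum_eq
  -- lower bound : ‖x‖^2 ≤ B2 * P
  have hlow' : ‖x‖ ^ 2 ≤ B2 * P := by
    have h := hinner x y
    rw [hxy] at h
    have hx2 : ⟪x, x⟫ = ((‖x‖ ^ 2 : ℝ) : ℂ) := by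
      rw [inner_self_eq_norm_sq_to_K]; norm_num
    rw [hx2] at h
    have hre : HasSum (fun k => (⟪e k, y⟫ * ⟪x, e k⟫).re) (‖x‖ ^ 2) := by
      have := h.mapL Complex.reCLM
      simpa only [Complex.reCLM_apply, Complex.ofReal_re] using this
    have hg : Summable fun k => (B2 * ‖⟪e k, y⟫‖ ^ 2 + B2⁻¹ * ‖⟪e k, x⟫‖ ^ 2) / 2 :=
      (((hsum y).mul_left B2).add ((hsum x).mul_left B2⁻¹)).div_const 2
    have hterm : ∀ k, (⟪e k, y⟫ * ⟪x, e k⟫).re ≤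
        (B2 * ‖⟪e k, y⟫‖ ^ 2 + B2⁻¹ * ‖⟪e k, x⟫‖ ^ 2) / 2 := by
      intro k
      have h1 : (⟪e k, y⟫ * ⟪x, e k⟫).re ≤ ‖⟪e k, y⟫‖ * ‖⟪x, e k⟫‖ := by
        calc (⟪e k, y⟫ * ⟪x, e k⟫).re ≤ ‖⟪e k, y⟫ * ⟪x, e k⟫‖ := Complex.re_le_norm _
          _ = ‖⟪e k, y⟫‖ * ‖⟪x, e k⟫‖ := by rw [norm_mul]
      have h2 : ‖⟪x, e k⟫‖ = ‖⟪e k, x⟫‖ := by rw [norm_inner_symm]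
      rw [h2] at h1
      have hsq := sq_nonneg (B2 * ‖⟪e k, y⟫‖ - ‖⟪e k, x⟫‖)
      have hc : B2⁻¹ * B2 = 1 := inv_mul_cancel₀ hB2.ne'
      nlinarith [mul_nonneg (le_of_lt (inv_pos.mpr hB2)) hsq]
    have hle : ‖x‖ ^ 2 ≤ ∑' k, (B2 * ‖⟪e k, y⟫‖ ^ 2 + B2⁻¹ * ‖⟪e k, x⟫‖ ^ 2) / 2 := by
      rw [← hre.tsum_eq]
      exact Summable.tsum_le_tsum hterm hre.summable hg
    have htg : ∑' k, (B2 * ‖⟪e k, y⟫‖ ^ 2 + B2⁻¹ * ‖⟪e k, x⟫‖ ^ 2) / 2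
        = (B2 * P + B2⁻¹ * Q) / 2 := by
      rw [tsum_div_const, Summable.tsum_add ((hsum y).mul_left B2) ((hsum x).mul_left B2⁻¹),
        tsum_mul_left, tsum_mul_left]
    rw [htg] at hle
    have hQ : Q ≤ B2 * ‖x‖ ^ 2 := hupp x
    have hc : B2⁻¹ * B2 = 1 := inv_mul_cancel₀ hB2.ne'
    nlinarith [mul_le_mul_of_nonneg_left hQ (le_of_lt (inv_pos.mpr hB2))]
  -- upper bound : P ≤ B1⁻¹ * ‖x‖^2
  have hupp' : P ≤ B1⁻¹ * ‖x‖ ^ 2 := by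
    have h1 : P ≤ ‖y‖ * ‖x‖ := by
      rw [hPval]
      calc (⟪y, x⟫ : ℂ).re ≤ ‖(⟪y, x⟫ : ℂ)‖ := Complex.re_le_norm _
        _ ≤ ‖y‖ * ‖x‖ := norm_inner_le_norm y x
    have h2 : B1 * ‖y‖ ^ 2 ≤ P := hlow y
    have hc : B1⁻¹ * B1 = 1 := inv_mul_cancel₀ hB1.ne'
    nlinarith [mul_nonneg (le_of_lt (inv_pos.mpr hB1)) (sq_nonneg (B1 * ‖y‖ - ‖x‖))]
  refine ⟨hsum', ?_, ?_⟩
  · rw [htse]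
    nlinarith [mul_le_mul_of_nonneg_left hlow' (le_of_lt (inv_pos.mpr hB2)),
      inv_mul_cancel₀ hB2.ne']
  · rw [htse]; exact hupp'
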